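/- Crossing walls have orthogonal labels, and the dimension bound (Lemma 'hyperplane char'(2) and Corollary 'dimension'): Let a hierarchical family of trees be given, with 0-consistent set Q. If two distinct walls of Q, dual to an edge of T_U and an edge of T_V respectively, cross, then U ⊥ V. Consequently, in any family of pairwise-crossing walls the domain labels are pairwise orthogonal (in particular pairwise distinct), and the cardinality of such a family is at most the maximal cardinality of a pairwise-orthogonal subset of 𝒰. -/

import Mathlib

/-- `a` and `b` lie in the same connected component of the tree `G` with the vertex `w`
deleted (equivalently: `a, b ≠ w` and `w` does not lie on the geodesic from `a` to `b`). -/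
def treeSameComp {α : Type*} (G : SimpleGraph α) (w a b : α) : Prop :=
  a ≠ w ∧ b ≠ w ∧ G.dist a w + G.dist w b ≠ G.dist a b

/-- `m` is the median of `a`, `b`, `c` in the tree `G`: it lies on all three
pairwise geodesics. -/
def IsTreeMedian {α : Type*} (G : SimpleGraph α) (a b c m : α) : Prop :=
  G.dist a m + G.dist m b = G.dist a b ∧
  G.dist a m + G.dist m c = G.dist a c ∧
  G.dist b m + G.dist m c = G.dist b c

/-- A hierarchical family of trees: a finite index set `Idx` of domains with relations
`⊏` (proper nesting) and `⊥` (orthogonality), a finite simplicial tree `G U` on the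
finite vertex set `Vtx U` for each domain `U`, marked vertices labeled by the finite set
`F`, and relative projection data `δup`/`δdown` satisfying coherence, bounded geodesic
image, and consistency of the marked tuples. -/
structure HFT (Idx : Type*) [Fintype Idx] (Vtx : Idx → Type*) [∀ U, Fintype (Vtx U)]
    (F : Type*) [Fintype F] where
  /-- proper nesting `⊏` -/
  pnest : Idx → Idx → Prop
  /-- orthogonality `⊥` -/
  orth : Idx → Idx → Prop
  pnest_irrefl : ∀ U, ¬ pnest U U
  pnest_trans : ∀ U V W, pnest U V → pnest V W → pnest U W
  /-- `⊏` has a unique maximal element -/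
  max_unique : ∃! m : Idx, ∀ W, ¬ pnest m W
  orth_symm : ∀ U V, orth U V → orth V U
  orth_irrefl : ∀ U, ¬ orth U U
  orth_not_pnest : ∀ U V, orth U V → ¬ pnest U V
  /-- the tree associated to each domain -/
  G : (U : Idx) → SimpleGraph (Vtx U)
  tree : ∀ U, (G U).IsTree
  /-- the marked vertex of `T_U` labeled by `f : F` -/
  mark : (U : Idx) → F → Vtx U
  /-- every leaf is marked -/
  leaf_marked : ∀ (U : Idx) (v : Vtx U),
    Set.Subsingleton {w : Vtx U | (G U).Adj v w} → ∃ f : F, mark U f = v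
  /-- the relative projection vertex `δup V U = δ^V_U ∈ T_U`
  (relevant when `V ⊏ U` or `V ⋔ U`) -/
  δup : (V U : Idx) → Vtx U
  /-- the relative projection map `δdown U V = δ^U_V : T_U → T_V` (for `V ⊏ U`) -/
  δdown : (U V : Idx) → Vtx U → Vtx V
  /-- every component of `T_U − δ^V_U` contains a marked vertex -/
  comp_marked : ∀ V U : Idx,
    (pnest V U ∨ (V ≠ U ∧ ¬ pnest V U ∧ ¬ pnest U V ∧ ¬ orth V U)) →
    ∀ a : Vtx U, a ≠ δup V U → ∃ f : F, treeSameComp (G U) (δup V U) a (mark U f)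
  /-- `δ^U_W = δ^V_W` whenever `U ⊥ V`, `V ⊏ W`, and `U ⊏ W` or `U ⋔ W` -/
  δ_coherent : ∀ U V W : Idx, orth U V → pnest V W →
    (pnest U W ∨ (U ≠ W ∧ ¬ pnest U W ∧ ¬ pnest W U ∧ ¬ orth U W)) →
    δup U W = δup V W
  /-- bounded geodesic image: `δ^U_V` is constant on each component of `T_U − δ^V_U` … -/
  bgi_const : ∀ U V : Idx, pnest V U → ∀ a b : Vtx U,
    treeSameComp (G U) (δup V U) a b → δdown U V a = δdown U V b
  /-- … with value `f̂_V` on the component containing `f̂_U` -/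
  bgi_mark : ∀ U V : Idx, pnest V U → ∀ f : F,
    mark U f ≠ δup V U → δdown U V (mark U f) = mark V f
  /-- the marked tuples are 0-consistent (transverse case) -/
  mark_consistent_t : ∀ (f : F) (U V : Idx),
    (U ≠ V ∧ ¬ pnest U V ∧ ¬ pnest V U ∧ ¬ orth U V) →
    mark U f = δup V U ∨ mark V f = δup U V
  /-- the marked tuples are 0-consistent (nested case) -/
  mark_consistent_n : ∀ (f : F) (U V : Idx), pnest V U →
    mark U f = δup V U ∨ mark V f = δdown U V (mark U f)

namespace HFT

variable {Idx : Type*} [Fintype Idx] {Vtx : Idx → Type*} [∀ U, Fintype (Vtx U)]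
  {F : Type*} [Fintype F]

/-- Transversality `U ⋔ V`: distinct, not nested either way, not orthogonal. -/
def transv (H : HFT Idx Vtx F) (U V : Idx) : Prop :=
  U ≠ V ∧ ¬ H.pnest U V ∧ ¬ H.pnest V U ∧ ¬ H.orth U V

/-- A tuple of vertices is 0-consistent. -/
def ZeroConsistent (H : HFT Idx Vtx F) (x : ∀ U, Vtx U) : Prop :=
  (∀ U V, H.transv U V → x U = H.δup V U ∨ x V = H.δup U V) ∧
  (∀ U V, H.pnest V U → x U = H.δup V U ∨ x V = H.δdown U V (x U))

/-- The set `Q` of all 0-consistent tuples. -/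
def Q (H : HFT Idx Vtx F) : Set (∀ U, Vtx U) := {x | H.ZeroConsistent x}

/-- The ℓ¹ metric on tuples: `d_Q(x, y) = Σ_U d_{T_U}(x_U, y_U)`. -/
noncomputable def dQ (H : HFT Idx Vtx F) (x y : ∀ U, Vtx U) : ℕ :=
  ∑ U : Idx, (H.G U).dist (x U) (y U)

/-- The half-tree of the edge `{u, v}` of `T_U` on the `u`-side: the vertices strictly
closer to `u` than to `v`. -/
def halfTree (H : HFT Idx Vtx F) (U : Idx) (u v : Vtx U) : Set (Vtx U) :=
  {w | (H.G U).dist w u < (H.G U).dist w v}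

/-- The half-space of `Q` determined by the half-tree of `{u, v} ⊆ T_U` on the
`u`-side. -/
def halfSpace (H : HFT Idx Vtx F) (U : Idx) (u v : Vtx U) : Set (∀ W, Vtx W) :=
  {x | x ∈ H.Q ∧ x U ∈ H.halfTree U u v}

/-- Two walls (dual to the edge `{u, v}` of `T_U` and the edge `{u', v'}` of `T_V`)
cross: all four intersections of half-spaces are nonempty. -/
def Crosses (H : HFT Idx Vtx F) (U : Idx) (u v : Vtx U) (V : Idx) (u' v' : Vtx V) :
    Prop :=
  (H.halfSpace U u v ∩ H.halfSpace V u' v').Nonempty ∧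
  (H.halfSpace U u v ∩ H.halfSpace V v' u').Nonempty ∧
  (H.halfSpace U v u ∩ H.halfSpace V u' v').Nonempty ∧
  (H.halfSpace U v u ∩ H.halfSpace V v' u').Nonempty

/-- Two walls are transverse: none of the four inclusions among their half-spaces and
complements holds. -/
def WallTransverse (H : HFT Idx Vtx F) (U : Idx) (u v : Vtx U) (V : Idx)
    (u' v' : Vtx V) : Prop :=
  ¬ (H.halfSpace U u v ⊆ H.halfSpace V u' v') ∧
  ¬ (H.halfSpace U u v ⊆ H.halfSpace V v' u') ∧
  ¬ (H.halfSpace U v u ⊆ H.halfSpace V u' v') ∧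
  ¬ (H.halfSpace U v u ⊆ H.halfSpace V v' u')

end HFT

variable {Idx : Type*} [Fintype Idx] {Vtx : Idx → Type*} [∀ U, Fintype (Vtx U)]
  {F : Type*} [Fintype F]

section TreeAux

open SimpleGraph

variable {α : Type*} {G : SimpleGraph α} {u v a b w x y p : α}

lemma exists_geodesic (hc : G.Connected) (a b : α) :
    ∃ p : G.Walk a b, p.IsPath ∧ p.length = G.dist a b := by
  classical
  obtain ⟨p, hp⟩ := hc.exists_walk_length_eq_dist a b
  refine ⟨p.bypass, p.bypass_isPath, le_antisymm ?_ (SimpleGraph.dist_le _)⟩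
  calc p.bypass.length ≤ p.length := p.length_bypass_le
    _ = _ := hp

lemma dist_add_dist_le (q : G.Walk a b) (hx : x ∈ q.support) :
    G.dist a x + G.dist x b ≤ q.length := by
  classical
  have h := q.take_spec hx
  calc G.dist a x + G.dist x b
      ≤ (q.takeUntil x hx).length + (q.dropUntil x hx).length :=
        Nat.add_le_add (SimpleGraph.dist_le _) (SimpleGraph.dist_le _)
    _ = q.length := by rw [← SimpleGraph.Walk.length_append, h]

lemma adj_cases (ht : G.IsTree) (huv : G.Adj u v) (w : α) :
    G.dist w v = G.dist w u + 1 ∨ G.dist w u = G.dist w v + 1 := by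
  obtain ⟨P, hP, hPlen⟩ := exists_geodesic ht.isConnected w u
  by_cases hv : v ∈ P.support
  · right
    have h1 : G.dist w v + G.dist v u ≤ P.length := dist_add_dist_le P hv
    have h2 : G.dist v u = 1 := SimpleGraph.dist_eq_one_iff_adj.mpr huv.symm
    have h3 : G.dist w u ≤ G.dist w v + G.dist v u := ht.isConnected.dist_triangle
    omega
  · left
    have hQ : (P.concat huv).IsPath := by
      rw [SimpleGraph.Walk.isPath_def, SimpleGraph.Walk.support_concat]
      refine List.Nodup.append hP.support_nodup (List.nodup_singleton v) ?_
      intro z hz hz'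
      rw [List.mem_singleton] at hz'
      subst hz'
      exact hv hz
    obtain ⟨R, hR, hRlen⟩ := exists_geodesic ht.isConnected w v
    have huniq := ht.IsAcyclic.path_unique ⟨P.concat huv, hQ⟩ ⟨R, hR⟩
    have hlen : (P.concat huv).length = R.length :=
      congrArg (fun q : G.Path w v => q.1.length) huniq
    rw [SimpleGraph.Walk.length_concat] at hlen
    omega

lemma side_eq (ht : G.IsTree) (huv : G.Adj u v) (hw : G.dist w u < G.dist w v) :
    G.dist w v = G.dist w u + 1 := by
  rcases adj_cases ht huv w with h | h
  · exact h
  · omega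

lemma cross_dist (ht : G.IsTree) (huv : G.Adj u v)
    (ha : G.dist a v = G.dist a u + 1) (hb : G.dist b u = G.dist b v + 1) :
    G.dist a b = G.dist a u + 1 + G.dist v b := by
  obtain ⟨P, hP, hPlen⟩ := exists_geodesic ht.isConnected a u
  obtain ⟨R, hR, hRlen⟩ := exists_geodesic ht.isConnected v b
  have hPside : ∀ x ∈ P.support, G.dist x v = G.dist x u + 1 := by
    intro x hx
    rcases adj_cases ht huv x with h | h
    · exact h
    · exfalso
      have h1 : G.dist a x + G.dist x u ≤ G.dist a u := hPlen ▸ dist_add_dist_le P hx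
      have h2 : G.dist a v ≤ G.dist a x + G.dist x v := ht.isConnected.dist_triangle
      omega
  have hRside : ∀ x ∈ R.support, G.dist x u = G.dist x v + 1 := by
    intro x hx
    rcases adj_cases ht huv x with h | h
    · exfalso
      have hx' : x ∈ R.reverse.support := by
        rw [SimpleGraph.Walk.support_reverse]; exact List.mem_reverse.mpr hx
      have h1 : G.dist b x + G.dist x v ≤ G.dist b v := by
        have := dist_add_dist_le R.reverse hx'
        rwa [SimpleGraph.Walk.length_reverse, hRlen, SimpleGraph.dist_comm (u := v)] at this
      have h2 : G.dist b u ≤ G.dist b x + G.dist x u := ht.isConnected.dist_triangle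
      omega
    · exact h
  have hW : (P.append (SimpleGraph.Walk.cons huv R)).IsPath := by
    rw [SimpleGraph.Walk.isPath_def, SimpleGraph.Walk.support_append,
      SimpleGraph.Walk.support_cons, List.tail_cons]
    refine List.Nodup.append hP.support_nodup hR.support_nodup ?_
    intro z hz hz'
    have h1 := hPside z hz
    have h2 := hRside z hz'
    omega
  obtain ⟨S, hS, hSlen⟩ := exists_geodesic ht.isConnected a b
  have huniq := ht.IsAcyclic.path_unique ⟨P.append (SimpleGraph.Walk.cons huv R), hW⟩ ⟨S, hS⟩
  have hlen : (P.append (SimpleGraph.Walk.cons huv R)).length = S.length :=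
    congrArg (fun q : G.Path a b => q.1.length) huniq
  rw [SimpleGraph.Walk.length_append, SimpleGraph.Walk.length_cons] at hlen
  omega

lemma crossing_edge (ht : G.IsTree) (huv : G.Adj u v) (hab : G.Adj a b)
    (ha : G.dist a v = G.dist a u + 1) (hb : G.dist b u = G.dist b v + 1) :
    a = u ∧ b = v := by
  have h := cross_dist ht huv ha hb
  have h1 : G.dist a b ≤ 1 := by
    have := SimpleGraph.dist_le (SimpleGraph.Walk.cons hab SimpleGraph.Walk.nil)
    simpa using this
  have h2 : G.dist a u = 0 := by omega
  have h3 : G.dist v b = 0 := by omega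
  exact ⟨ht.isConnected.dist_eq_zero_iff.mp h2, (ht.isConnected.dist_eq_zero_iff.mp h3).symm⟩

lemma sameComp (ht : G.IsTree) (huv : G.Adj u v)
    (hx : G.dist x v = G.dist x u + 1) (hy : G.dist y v = G.dist y u + 1)
    (hp : G.dist p u = G.dist p v + 1) : treeSameComp G p x y := by
  have hxp : G.dist x p = G.dist x u + 1 + G.dist v p := cross_dist ht huv hx hp
  have hyp : G.dist y p = G.dist y u + 1 + G.dist v p := cross_dist ht huv hy hp
  have htri : G.dist x y ≤ G.dist x u + G.dist u y := ht.isConnected.dist_triangle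
  have hc1 : G.dist u y = G.dist y u := SimpleGraph.dist_comm
  have hc2 : G.dist p y = G.dist y p := SimpleGraph.dist_comm
  refine ⟨fun h => ?_, fun h => ?_, ?_⟩
  · subst h; omega
  · subst h; omega
  · omega

end TreeAux


open SimpleGraph in
lemma HFT.nested_no_cross (H : HFT Idx Vtx F) {U V : Idx} (hVU : H.pnest V U)
    {u v : Vtx U} (huv : (H.G U).Adj u v) {x y : ∀ W, Vtx W}
    (hxQ : x ∈ H.Q) (hyQ : y ∈ H.Q)
    (hp : (H.G U).dist (H.δup V U) v = (H.G U).dist (H.δup V U) u + 1)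
    (hxU : (H.G U).dist (x U) u = (H.G U).dist (x U) v + 1)
    (hyU : (H.G U).dist (y U) u = (H.G U).dist (y U) v + 1)
    (hxyV : x V ≠ y V) : False := by
  have ht := H.tree U
  have hxp : x U ≠ H.δup V U := fun h => by rw [h] at hxU; omega
  have hyp : y U ≠ H.δup V U := fun h => by rw [h] at hyU; omega
  have hx := (hxQ.2 U V hVU).resolve_left hxp
  have hy := (hyQ.2 U V hVU).resolve_left hyp
  have hsc : treeSameComp (H.G U) (H.δup V U) (x U) (y U) :=
    sameComp ht huv.symm hxU hyU hp
  exact hxyV (hx.trans ((H.bgi_const U V hVU _ _ hsc).trans hy.symm))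

open SimpleGraph in
lemma HFT.same_tree_no_cross (H : HFT Idx Vtx F) {U : Idx} {u v u' v' : Vtx U}
    (huv : (H.G U).Adj u v) (hu'v' : (H.G U).Adj u' v')
    (hcr : H.Crosses U u v U u' v') : False := by
  have ht := H.tree U
  obtain ⟨⟨x1, hx1⟩, ⟨x2, hx2⟩, ⟨x3, hx3⟩, ⟨x4, hx4⟩⟩ := hcr
  have n1 : (H.G U).dist (x1 U) v = (H.G U).dist (x1 U) u + 1 := side_eq ht huv hx1.1.2
  have n2 : (H.G U).dist (x2 U) v = (H.G U).dist (x2 U) u + 1 := side_eq ht huv hx2.1.2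
  have n3 : (H.G U).dist (x3 U) u = (H.G U).dist (x3 U) v + 1 := side_eq ht huv.symm hx3.1.2
  have n4 : (H.G U).dist (x4 U) u = (H.G U).dist (x4 U) v + 1 := side_eq ht huv.symm hx4.1.2
  have m1 : (H.G U).dist (x1 U) v' = (H.G U).dist (x1 U) u' + 1 := side_eq ht hu'v' hx1.2.2
  have m2 : (H.G U).dist (x2 U) u' = (H.G U).dist (x2 U) v' + 1 := side_eq ht hu'v'.symm hx2.2.2
  have m3 : (H.G U).dist (x3 U) v' = (H.G U).dist (x3 U) u' + 1 := side_eq ht hu'v' hx3.2.2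
  have m4 : (H.G U).dist (x4 U) u' = (H.G U).dist (x4 U) v' + 1 := side_eq ht hu'v'.symm hx4.2.2
  rcases adj_cases ht huv u' with h1 | h1 <;> rcases adj_cases ht huv v' with h2 | h2
  · -- u' and v' both on the u-side: use x3, x4 (on the v-side)
    have c3 := cross_dist ht huv.symm n3 h1
    have c3' := cross_dist ht huv.symm n3 h2
    have c4 := cross_dist ht huv.symm n4 h1
    have c4' := cross_dist ht huv.symm n4 h2
    omega
  · -- u' on the u-side, v' on the v-side: the edges coincide
    obtain ⟨rfl, rfl⟩ := crossing_edge ht huv hu'v' h1 h2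
    omega
  · -- u' on the v-side, v' on the u-side: the edges coincide with reversed orientation
    obtain ⟨rfl, rfl⟩ := crossing_edge ht huv hu'v'.symm h2 h1
    omega
  · -- u' and v' both on the v-side: use x1, x2 (on the u-side)
    have c1 := cross_dist ht huv n1 h1
    have c1' := cross_dist ht huv n1 h2
    have c2 := cross_dist ht huv n2 h1
    have c2' := cross_dist ht huv n2 h2
    omega

open SimpleGraph in
lemma HFT.crossing_orth (H : HFT Idx Vtx F) (U V : Idx) (u v : Vtx U) (u' v' : Vtx V)
    (huv : (H.G U).Adj u v) (hu'v' : (H.G V).Adj u' v')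
    (hcr : H.Crosses U u v V u' v') : H.orth U V := by
  by_contra horth
  rcases eq_or_ne U V with rfl | hne
  · exact H.same_tree_no_cross huv hu'v' hcr
  obtain ⟨⟨x1, hx1⟩, ⟨x2, hx2⟩, ⟨x3, hx3⟩, ⟨x4, hx4⟩⟩ := hcr
  have htU := H.tree U
  have htV := H.tree V
  have n1 : (H.G U).dist (x1 U) v = (H.G U).dist (x1 U) u + 1 := side_eq htU huv hx1.1.2
  have n2 : (H.G U).dist (x2 U) v = (H.G U).dist (x2 U) u + 1 := side_eq htU huv hx2.1.2
  have n3 : (H.G U).dist (x3 U) u = (H.G U).dist (x3 U) v + 1 := side_eq htU huv.symm hx3.1.2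
  have n4 : (H.G U).dist (x4 U) u = (H.G U).dist (x4 U) v + 1 := side_eq htU huv.symm hx4.1.2
  have m1 : (H.G V).dist (x1 V) v' = (H.G V).dist (x1 V) u' + 1 := side_eq htV hu'v' hx1.2.2
  have m2 : (H.G V).dist (x2 V) u' = (H.G V).dist (x2 V) v' + 1 := side_eq htV hu'v'.symm hx2.2.2
  have m3 : (H.G V).dist (x3 V) v' = (H.G V).dist (x3 V) u' + 1 := side_eq htV hu'v' hx3.2.2
  have m4 : (H.G V).dist (x4 V) u' = (H.G V).dist (x4 V) v' + 1 := side_eq htV hu'v'.symm hx4.2.2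
  by_cases hVU : H.pnest V U
  · rcases adj_cases htU huv (H.δup V U) with hp | hp
    · exact H.nested_no_cross hVU huv hx3.1.1 hx4.1.1 hp n3 n4
        (fun h => by rw [h] at m3; omega)
    · exact H.nested_no_cross hVU huv.symm hx1.1.1 hx2.1.1 hp n1 n2
        (fun h => by rw [h] at m1; omega)
  by_cases hUV : H.pnest U V
  · rcases adj_cases htV hu'v' (H.δup U V) with hq | hq
    · exact H.nested_no_cross hUV hu'v' hx2.1.1 hx4.1.1 hq m2 m4
        (fun h => by rw [h] at n2; omega)
    · exact H.nested_no_cross hUV hu'v'.symm hx1.1.1 hx3.1.1 hq m1 m3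
        (fun h => by rw [h] at n1; omega)
  have htr : H.transv U V := ⟨hne, hUV, hVU, horth⟩
  rcases adj_cases htU huv (H.δup V U) with hp | hp <;>
    rcases adj_cases htV hu'v' (H.δup U V) with hq | hq
  · rcases hx4.1.1.1 U V htr with h | h
    · rw [h] at n4; omega
    · rw [h] at m4; omega
  · rcases hx3.1.1.1 U V htr with h | h
    · rw [h] at n3; omega
    · rw [h] at m3; omega
  · rcases hx2.1.1.1 U V htr with h | h
    · rw [h] at n2; omega
    · rw [h] at m2; omega
  · rcases hx1.1.1.1 U V htr with h | h
    · rw [h] at n1; omega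
    · rw [h] at m1; omega


/-- **Crossing walls have orthogonal labels, and the dimension bound**
(Lemma `hyperplane char`(2) and Corollary `dimension`). -/
theorem crossing_walls_orth (H : HFT Idx Vtx F) :
    -- crossing walls have orthogonal domain labels
    (∀ (U V : Idx) (u v : Vtx U) (u' v' : Vtx V),
      (H.G U).Adj u v → (H.G V).Adj u' v' →
      H.Crosses U u v V u' v' → H.orth U V) ∧
    -- hence a family of pairwise-crossing walls has pairwise orthogonal (in particular
    -- pairwise distinct) labels, and its cardinality is at most the maximal cardinality
    -- of a pairwise-orthogonal subset of the index set
    (∀ (n : ℕ) (lab : Fin n → Idx) (e : (i : Fin n) → Vtx (lab i) × Vtx (lab i)),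
      (∀ i, (H.G (lab i)).Adj (e i).1 (e i).2) →
      (∀ i j, i ≠ j →
        H.Crosses (lab i) (e i).1 (e i).2 (lab j) (e j).1 (e j).2) →
      Function.Injective lab ∧
      (∀ i j, i ≠ j → H.orth (lab i) (lab j)) ∧
      ∃ A : Finset Idx, (∀ a ∈ A, ∀ b ∈ A, a ≠ b → H.orth a b) ∧ n ≤ A.card) := by
  refine ⟨H.crossing_orth, ?_⟩
  classical
  intro n lab e hadj hcr
  have horth : ∀ i j, i ≠ j → H.orth (lab i) (lab j) := fun i j hij =>
    H.crossing_orth (lab i) (lab j) (e i).1 (e i).2 (e j).1 (e j).2 (hadj i) (hadj j)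
      (hcr i j hij)
  have hinj : Function.Injective lab := by
    intro i j hij
    by_contra hne
    have h := horth i j hne
    rw [hij] at h
    exact H.orth_irrefl _ h
  refine ⟨hinj, horth, Finset.univ.image lab, ?_, ?_⟩
  · rintro a ha b hb hab
    simp only [Finset.mem_image] at ha hb
    obtain ⟨i, -, rfl⟩ := ha
    obtain ⟨j, -, rfl⟩ := hb
    exact horth i j (fun h => hab (by rw [h]))
  · rw [Finset.card_image_of_injective _ hinj, Finset.card_univ, Fintype.card_fin]
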